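/- For any biSST T, the HDT0L instance I_T constructed from T (with axiom words v = w = #, pairs (f_q^1, f_q^2) for final states q, pairs (f_t, f_t) for transitions t, and final pair (f_{q0}, f_{q0})) is valid if and only if T is diagonal. -/

import Mathlib

namespace SSTPaper

/-- Homomorphic extension of a substitution, fixing output letters. -/
def ext {X Γ : Type} (σ : X → List (Γ ⊕ X)) : List (Γ ⊕ X) → List (Γ ⊕ X) :=
  fun w => w.flatMap (Sum.elim (fun g => [Sum.inl g]) σ)

/-- Composition of substitutions: (σ1 σ2)(x) = σ̂1(σ2 x). -/
def comp {X Γ : Type} (σ1 σ2 : X → List (Γ ⊕ X)) : X → List (Γ ⊕ X) :=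
  fun x => ext σ1 (σ2 x)

/-- The identity substitution. -/
def idSubst {X Γ : Type} : X → List (Γ ⊕ X) := fun x => [Sum.inr x]

end SSTPaper

namespace SSTPaper

/-- Erase variables and keep output letters, after applying σ to a variable word:
    this computes σ_ε σ (xs). -/
def evalOut {X Γ : Type} (σ : X → List (Γ ⊕ X)) (xs : List X) : List Γ :=
  (xs.flatMap σ).filterMap (Sum.elim some (fun _ => none))

/-- Nondeterministic streaming string transducer. -/
structure NSST (S Γ Q X : Type) where
  init : Q
  final : Q → Prop
  delta : Q → S → Q → Prop
  rho : Q → S → Q → X → List (Γ ⊕ X)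
  out : Q → List X

/-- Nondeterministic biSST: like an SST but outputs a pair of variable words. -/
structure BiSST (S Γ Q X : Type) where
  init : Q
  final : Q → Prop
  delta : Q → S → Q → Prop
  rho : Q → S → Q → X → List (Γ ⊕ X)
  out : Q → List X × List X

/-- Runs of an SST, together with the induced substitution
    σ_r = ρ(t₁) ρ(t₂) ⋯ ρ(t_n) (left-to-right composition). -/
inductive Run {S Γ Q X : Type} (T : NSST S Γ Q X) :
    Q → List S → Q → (X → List (Γ ⊕ X)) → Prop
  | nil (q : Q) : Run T q [] q idSubst
  | cons {q q' q'' : Q} {a : S} {w : List S} {σ : X → List (Γ ⊕ X)} :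
      T.delta q a q' → Run T q' w q'' σ →
      Run T q (a :: w) q'' (comp (T.rho q a q') σ)

/-- Runs of a biSST, with induced substitution. -/
inductive BiRun {S Γ Q X : Type} (T : BiSST S Γ Q X) :
    Q → List S → Q → (X → List (Γ ⊕ X)) → Prop
  | nil (q : Q) : BiRun T q [] q idSubst
  | cons {q q' q'' : Q} {a : S} {w : List S} {σ : X → List (Γ ⊕ X)} :
      T.delta q a q' → BiRun T q' w q'' σ →
      BiRun T q (a :: w) q'' (comp (T.rho q a q') σ)

/-- The relation ⟦T⟧ ⊆ Σ* × Γ* defined by a nondeterministic SST. -/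
def NSST.Rel {S Γ Q X : Type} (T : NSST S Γ Q X) (w : List S) (o : List Γ) : Prop :=
  ∃ q σ, Run T T.init w q σ ∧ T.final q ∧ o = evalOut σ (T.out q)

/-- The relation defined by a biSST (input, pair of outputs). -/
def BiSST.Rel {S Γ Q X : Type} (T : BiSST S Γ Q X) (w : List S)
    (o : List Γ × List Γ) : Prop :=
  ∃ q σ, BiRun T T.init w q σ ∧ T.final q ∧
    o.1 = evalOut σ (T.out q).1 ∧ o.2 = evalOut σ (T.out q).2

/-- Domain of an SST. -/
def NSST.Dom {S Γ Q X : Type} (T : NSST S Γ Q X) : Set (List S) :=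
  {w | ∃ o, T.Rel w o}

/-- Domain of a biSST. -/
def BiSST.Dom {S Γ Q X : Type} (T : BiSST S Γ Q X) : Set (List S) :=
  {w | ∃ o, T.Rel w o}

/-- A biSST is diagonal if every output pair has equal components. -/
def BiSST.Diagonal {S Γ Q X : Type} (T : BiSST S Γ Q X) : Prop :=
  ∀ w o₁ o₂, T.Rel w (o₁, o₂) → o₁ = o₂

/-- A nondeterministic SST is functional if it defines a partial function. -/
def NSST.Functional {S Γ Q X : Type} (T : NSST S Γ Q X) : Prop :=
  ∀ w o₁ o₂, T.Rel w o₁ → T.Rel w o₂ → o₁ = o₂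

/-- Determinism of a transition relation. -/
def DetRel {Q S : Type} (δ : Q → S → Q → Prop) : Prop :=
  ∀ q a q₁ q₂, δ q a q₁ → δ q a q₂ → q₁ = q₂

/-- Rename variables inside a word over Γ ∪ X. -/
def mapV {Γ X X' : Type} (f : X → X') : List (Γ ⊕ X) → List (Γ ⊕ X') :=
  List.map (Sum.map id f)

/-- Synchronized product of two nondeterministic SSTs, as a biSST. -/
def prodSST {S Γ Q₁ Q₂ X₁ X₂ : Type} (T₁ : NSST S Γ Q₁ X₁) (T₂ : NSST S Γ Q₂ X₂) :
    BiSST S Γ (Q₁ × Q₂) (X₁ ⊕ X₂) where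
  init := (T₁.init, T₂.init)
  final := fun p => T₁.final p.1 ∧ T₂.final p.2
  delta := fun p a p' => T₁.delta p.1 a p'.1 ∧ T₂.delta p.2 a p'.2
  rho := fun p a p' =>
    Sum.elim (fun x₁ => mapV Sum.inl (T₁.rho p.1 a p'.1 x₁))
             (fun x₂ => mapV Sum.inr (T₂.rho p.2 a p'.2 x₂))
  out := fun p => ((T₁.out p.1).map Sum.inl, (T₂.out p.2).map Sum.inr)

end SSTPaper

namespace SSTPaper

/-- Apply a monoid morphism (given by its action on letters) to a word. -/
def mapply {A B : Type} (f : A → List B) (w : List A) : List B := w.flatMap f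

/-- Value h(h_{i₁}( … h_{i_k}(v) … )) of an HDT0L instance on an index sequence. -/
def hdtVal {A B : Type} {n : ℕ} (hs : Fin n → A → List A) (h : A → List B)
    (l : List (Fin n)) (v : List A) : List B :=
  mapply h (l.foldr (fun i w => mapply (hs i) w) v)

/-- Validity of an HDT0L instance. -/
def HDT0LValid {A B : Type} {n : ℕ} (hs gs : Fin n → A → List A)
    (h g : A → List B) (v w : List A) : Prop :=
  ∀ l : List (Fin n), hdtVal hs h l v = hdtVal gs g l w

end SSTPaper

namespace SSTPaper

/-- Runs of a biSST recording the list of transitions used. -/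
inductive BiRunL {S Γ Q X : Type} (T : BiSST S Γ Q X) :
    Q → List S → Q → List (Q × S × Q) → Prop
  | nil (q : Q) : BiRunL T q [] q []
  | cons {q q' q'' : Q} {a : S} {w : List S} {ts : List (Q × S × Q)} :
      T.delta q a q' → BiRunL T q' w q'' ts →
      BiRunL T q (a :: w) q'' ((q, a, q') :: ts)

/-- The substitution induced by a list of transitions of a biSST:
    σ = ρ(t₁) ρ(t₂) ⋯ ρ(t_n). -/
def bsubstOf {S Γ Q X : Type} (T : BiSST S Γ Q X) (ts : List (Q × S × Q)) :
    X → List (Γ ⊕ X) :=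
  ts.foldr (fun t σ => comp (T.rho t.1 t.2.1 t.2.2) σ) idSubst

end SSTPaper

namespace SSTPaper

/-- Base letters X ∪ Γ ∪ {$, #} of the HDT0L alphabet built from a biSST:
    `Sum.inr (Sum.inr false)` is $ and `Sum.inr (Sum.inr true)` is #. -/
abbrev BaseL (X Γ : Type) := X ⊕ Γ ⊕ Bool

/-- The HDT0L alphabet A = {α_q : α ∈ X ∪ Γ ∪ {$,#}, q ∈ Q} ∪ {#};
    `Sum.inr ()` is the unsubscripted letter #. -/
abbrev ALet (X Γ Q : Type) := (BaseL X Γ × Q) ⊕ Unit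

/-- The morphism subscript_q. -/
def subscr {X Γ Q : Type} (q : Q) (α : BaseL X Γ) : ALet X Γ Q := Sum.inl (α, q)

/-- The morphism f_q^i for a final state q; `i = true` selects the first
    component π₁(F(q)) and `i = false` the second. It sends # to
    subscript_q($ · π_i(F(q))) and everything else to ε. -/
def fFin {S Γ Q X : Type} (T : BiSST S Γ Q X) (q : Q) (i : Bool) :
    ALet X Γ Q → List (ALet X Γ Q) :=
  fun α => match α with
    | Sum.inr _ =>
        subscr q (Sum.inr (Sum.inr false)) ::
          (cond i (T.out q).1 (T.out q).2).map (fun x => subscr q (Sum.inl x))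
    | _ => []

/-- The morphism f_t for a transition t = (q, a, q'). -/
def fTr {S Γ Q X : Type} [DecidableEq Q] (T : BiSST S Γ Q X) (t : Q × S × Q) :
    ALet X Γ Q → List (ALet X Γ Q) :=
  fun α => match α with
    | Sum.inl (Sum.inl x, p) =>
        if p = t.2.2 then
          (T.rho t.1 t.2.1 t.2.2 x).map
            (fun l => subscr t.1 (Sum.elim (fun g => Sum.inr (Sum.inl g)) Sum.inl l))
        else []
    | Sum.inl (Sum.inr (Sum.inl g), p) =>
        if p = t.2.2 then [subscr t.1 (Sum.inr (Sum.inl g))] else []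
    | Sum.inl (Sum.inr (Sum.inr false), p) =>
        if p = t.2.2 then [subscr t.1 (Sum.inr (Sum.inr false))] else []
    | _ => []

/-- The final morphism f_{q₀} : A* → B* = Γ*. -/
def fOut {S Γ Q X : Type} [DecidableEq Q] (T : BiSST S Γ Q X) :
    ALet X Γ Q → List Γ :=
  fun α => match α with
    | Sum.inl (Sum.inr (Sum.inl g), p) => if p = T.init then [g] else []
    | _ => []

end SSTPaper

namespace SSTPaper

variable {S Γ Q X : Type}

/-- An element of the index set Q_f ∪ δ of the HDT0L instance I_T. -/
def IdxEl (T : BiSST S Γ Q X) : Type :=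
  {q : Q // T.final q} ⊕ {t : Q × S × Q // T.delta t.1 t.2.1 t.2.2}

/-- The morphism associated with an index element: f_q^i (with `i = true`
    for f_q^1 and `i = false` for f_q^2) for a final state, f_t for a
    transition. -/
def idxMorph [DecidableEq Q] (T : BiSST S Γ Q X) (i : Bool) (e : IdxEl T) :
    ALet X Γ Q → List (ALet X Γ Q) :=
  Sum.elim (fun q => fFin T q.1 i) (fun t => fTr T t.1) e

/-- The composed word f_{i₁}(… f_{i_k}(#) …) for a sequence of indices. -/
def seqWord [DecidableEq Q] (T : BiSST S Γ Q X) (i : Bool) (l : List (IdxEl T)) :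
    List (ALet X Γ Q) :=
  l.foldr (fun e w => mapply (idxMorph T i e) w) [Sum.inr ()]

/-- A sequence over Q_f ∪ δ is valid if it consists of the transitions of a
    run of T from the initial state, followed by the final state this run
    reaches. -/
def ValidSeq (T : BiSST S Γ Q X) (l : List (IdxEl T)) : Prop :=
  ∃ (u : List S) (ts : List (Q × S × Q)) (q : Q) (hq : T.final q),
    BiRunL T T.init u q ts ∧
    l.map (Sum.map Subtype.val Subtype.val) =
      ts.map Sum.inr ++ [Sum.inl q]

end SSTPaper


namespace SSTPaper

section Aux

variable {S Γ Q X : Type}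

@[simp] lemma mapply_nil {A B : Type} (f : A → List B) : mapply f [] = [] := rfl

@[simp] lemma mapply_cons {A B : Type} (f : A → List B) (a : A) (l : List A) :
    mapply f (a :: l) = f a ++ mapply f l := rfl

lemma ext_flatMap {X Γ A : Type} (σ : X → List (Γ ⊕ X)) (g : A → List (Γ ⊕ X))
    (w : List A) : ext σ (w.flatMap g) = w.flatMap (fun x => ext σ (g x)) := by
  simp [ext, List.flatMap_assoc]

lemma ext_map_inr {X Γ : Type} (σ : X → List (Γ ⊕ X)) (vs : List X) :
    ext σ (vs.map Sum.inr) = vs.flatMap σ := by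
  induction vs with
  | nil => rfl
  | cons v vs ih => simp [ext] at *; simp [ih]

lemma flatMap_idSubst {X Γ : Type} (vs : List X) :
    vs.flatMap (idSubst (Γ := Γ)) = vs.map Sum.inr := by
  induction vs with
  | nil => rfl
  | cons v vs ih => simp [idSubst] at *; simp [ih]

/-- Lift a letter of Γ ⊕ X into the HDT0L alphabet, subscripted by p. -/
def liftL (p : Q) (l : Γ ⊕ X) : ALet X Γ Q :=
  Sum.inl (Sum.elim (fun g => Sum.inr (Sum.inl g)) Sum.inl l, p)

/-- The canonical word $_p · lift_p(w). -/
def Wd (p : Q) (w : List (Γ ⊕ X)) : List (ALet X Γ Q) :=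
  Sum.inl (Sum.inr (Sum.inr false), p) :: w.map (liftL p)

variable [DecidableEq Q] (T : BiSST S Γ Q X)

lemma fTr_liftL (t : Q × S × Q) (l : Γ ⊕ X) :
    fTr T t (liftL t.2.2 l) =
      (Sum.elim (fun g => [Sum.inl g]) (T.rho t.1 t.2.1 t.2.2) l).map (liftL t.1) := by
  cases l with
  | inl g => simp [liftL, fTr, subscr]
  | inr x => simp only [liftL, fTr, subscr, if_pos rfl, Sum.elim_inr]; rfl

lemma fTr_liftL_ne {p : Q} (t : Q × S × Q) (h : p ≠ t.2.2) (l : Γ ⊕ X) :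
    fTr T t (liftL p l) = [] := by
  cases l with
  | inl g => simp [liftL, fTr, h]
  | inr x => simp [liftL, fTr, h]

lemma mapply_fTr_Wd (t : Q × S × Q) (w : List (Γ ⊕ X)) :
    mapply (fTr T t) (Wd t.2.2 w) = Wd t.1 (ext (T.rho t.1 t.2.1 t.2.2) w) := by
  have hd : fTr T t (Sum.inl (Sum.inr (Sum.inr false), t.2.2)) =
      [Sum.inl (Sum.inr (Sum.inr false), t.1)] := by simp [fTr, subscr]
  simp [Wd, mapply, ext, List.flatMap_map, List.map_flatMap, fTr_liftL, hd]

lemma mapply_fTr_Wd_ne {p : Q} (t : Q × S × Q) (h : p ≠ t.2.2) (w : List (Γ ⊕ X)) :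
    mapply (fTr T t) (Wd p w) = [] := by
  have hd : fTr T t (Sum.inl (Sum.inr (Sum.inr false), p)) = [] := by simp [fTr, h]
  simp [Wd, mapply, List.flatMap_map, fTr_liftL_ne T t h, hd]

lemma mapply_fFin_Wd (q p : Q) (i : Bool) (w : List (Γ ⊕ X)) :
    mapply (fFin T q i) (Wd p w) = [] := by
  have h0 : ∀ l : Γ ⊕ X, fFin T q i (liftL p l) = [] := by
    intro l; cases l <;> rfl
  have hd : fFin T q i (Sum.inl (Sum.inr (Sum.inr false), p)) = [] := rfl
  simp [Wd, mapply, List.flatMap_map, h0, hd]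

lemma mapply_fFin_sharp (q : Q) (i : Bool) :
    mapply (fFin T q i) [Sum.inr ()] =
      Wd q ((cond i (T.out q).1 (T.out q).2).map Sum.inr) := by
  simp [mapply, fFin, Wd, subscr, liftL]

lemma mapply_fTr_sharp (t : Q × S × Q) :
    mapply (fTr T t) [Sum.inr ()] = [] := rfl

lemma mapply_fOut_Wd_init (w : List (Γ ⊕ X)) :
    mapply (fOut T) (Wd T.init w) =
      w.filterMap (Sum.elim some (fun _ => none)) := by
  have : ∀ l : Γ ⊕ X, fOut T (liftL T.init l) =
      (Sum.elim some (fun _ => none) l).toList := by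
    intro l; cases l with
    | inl g => simp [liftL, fOut]
    | inr x => rfl
  have hd : fOut T (Sum.inl (Sum.inr (Sum.inr false), T.init) : ALet X Γ Q) = [] := rfl
  simp [Wd, mapply, List.flatMap_map, this, hd,
    List.filterMap_eq_flatMap_toList]

lemma mapply_fOut_Wd_ne {p : Q} (h : p ≠ T.init) (w : List (Γ ⊕ X)) :
    mapply (fOut T) (Wd p w) = [] := by
  have : ∀ l : Γ ⊕ X, fOut T (liftL p l) = [] := by
    intro l; cases l with
    | inl g => simp [liftL, fOut, h]
    | inr x => rfl
  have hd : fOut T (Sum.inl (Sum.inr (Sum.inr false), p) : ALet X Γ Q) = [] := rfl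
  simp [Wd, mapply, List.flatMap_map, this, hd]

@[simp] lemma seqWord_nil (i : Bool) : seqWord T i [] = [Sum.inr ()] := rfl

@[simp] lemma seqWord_cons (i : Bool) (e : IdxEl T) (l : List (IdxEl T)) :
    seqWord T i (e :: l) = mapply (idxMorph T i e) (seqWord T i l) := rfl

/-- Forward evaluation along a run. -/
lemma run_seqWord {p q : Q} {u : List S} {σ : X → List (Γ ⊕ X)}
    (hr : BiRun T p u q σ) (hq : T.final q) :
    ∃ l : List (IdxEl T), ∀ i : Bool,
      seqWord T i l = Wd p ((cond i (T.out q).1 (T.out q).2).flatMap σ) := by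
  induction hr with
  | nil q =>
    refine ⟨[Sum.inl ⟨q, hq⟩], fun i => ?_⟩
    erw [seqWord_cons, seqWord_nil]
    show mapply (fFin T q i) [Sum.inr ()] = _
    rw [mapply_fFin_sharp, flatMap_idSubst]
  | @cons q q' q'' a w σ hd hr ih =>
    obtain ⟨l, hl⟩ := ih hq
    refine ⟨Sum.inr ⟨(q, a, q'), hd⟩ :: l, fun i => ?_⟩
    erw [seqWord_cons, hl i]
    show mapply (fTr T (q, a, q')) (Wd q' _) = _
    rw [mapply_fTr_Wd T (q, a, q')]
    rw [ext_flatMap]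
    rfl

/-- The structure invariant for arbitrary sequences. -/
lemma seqWord_cases (l : List (IdxEl T)) :
    (∀ i : Bool, seqWord T i l = [Sum.inr ()]) ∨
    (∀ i : Bool, seqWord T i l = []) ∨
    ∃ (p q : Q) (σ : X → List (Γ ⊕ X)) (u : List S),
      BiRun T p u q σ ∧ T.final q ∧ ∀ i : Bool,
        seqWord T i l = Wd p ((cond i (T.out q).1 (T.out q).2).flatMap σ) := by
  induction l with
  | nil => exact Or.inl fun i => rfl
  | cons e l ih =>
    rcases ih with h | h | ⟨p, q, σ, u, hr, hq, hw⟩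
    · cases e with
      | inl qf =>
        refine Or.inr (Or.inr ⟨qf.1, qf.1, idSubst, [], BiRun.nil qf.1, qf.2, fun i => ?_⟩)
        erw [seqWord_cons, h i]
        show mapply (fFin T qf.1 i) [Sum.inr ()] = _
        rw [mapply_fFin_sharp, flatMap_idSubst]
      | inr t =>
        refine Or.inr (Or.inl fun i => ?_)
        erw [seqWord_cons, h i]
        exact mapply_fTr_sharp T t.1
    · refine Or.inr (Or.inl fun i => ?_)
      rw [seqWord_cons, h i]
      rfl
    · cases e with
      | inl qf =>
        refine Or.inr (Or.inl fun i => ?_)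
        erw [seqWord_cons, hw i]
        exact mapply_fFin_Wd T qf.1 p i _
      | inr t =>
        by_cases hpt : p = t.1.2.2
        · subst hpt
          refine Or.inr (Or.inr ⟨t.1.1, q, comp (T.rho t.1.1 t.1.2.1 t.1.2.2) σ,
            t.1.2.1 :: u, BiRun.cons t.2 hr, hq, fun i => ?_⟩)
          erw [seqWord_cons, hw i]
          show mapply (fTr T t.1) (Wd t.1.2.2 _) = _
          rw [mapply_fTr_Wd, ext_flatMap]
          rfl
        · refine Or.inr (Or.inl fun i => ?_)
          erw [seqWord_cons, hw i]
          exact mapply_fTr_Wd_ne T t.1 hpt _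

end Aux

end SSTPaper

namespace SSTPaper

/-- The HDT0L instance I_T built from a biSST T is valid iff T is diagonal. -/
theorem reduction_valid_iff_diagonal {S Γ Q X : Type} [DecidableEq Q]
    (T : BiSST S Γ Q X) :
    (∀ l : List (IdxEl T),
        mapply (fOut T) (seqWord T true l) = mapply (fOut T) (seqWord T false l)) ↔
      T.Diagonal := by
  constructor
  · intro H w o₁ o₂ hrel
    obtain ⟨q, σ, hr, hq, h1, h2⟩ := hrel
    obtain ⟨l, hl⟩ := run_seqWord T hr hq
    have := H l
    rw [hl true, hl false, mapply_fOut_Wd_init, mapply_fOut_Wd_init] at this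
    simp only at h1 h2
    rw [h1, h2]
    exact this
  · intro hd l
    rcases seqWord_cases T l with h | h | ⟨p, q, σ, u, hr, hq, hw⟩
    · rw [h true, h false]
    · rw [h true, h false]
    · rw [hw true, hw false]
      by_cases hp : p = T.init
      · subst hp
        rw [mapply_fOut_Wd_init, mapply_fOut_Wd_init]
        exact hd u _ _ ⟨q, σ, hr, hq, rfl, rfl⟩
      · rw [mapply_fOut_Wd_ne T hp, mapply_fOut_Wd_ne T hp]

end SSTPaper
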